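/- If y - wq = e^{-t} at some time t₀ for a solution of the system, then y - wq = C e^{-t} for all t, where C = (y(t₀)-w(t₀)q(t₀))e^{t₀}; in particular y(t) - w(t)q(t) = e^{-t} is preserved: if y-wq equals e^{-t} at one point it equals e^{-t} everywhere. -/

import Mathlib

open Complex

theorem stmt_1 (α₀ α₁ α₂ η : ℂ) (hα : α₀ + α₁ + α₂ = 1)
    (x y z w q : ℝ → ℂ) (t₀ : ℝ)
    (hx : ∀ t, HasDerivAt x (-(x t * w t - α₂) * x t + 1/2) t)
    (hy : ∀ t, HasDerivAt y ((x t * w t + z t * q t - 1) * y t + α₁ * w t * q t) t)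
    (hz : ∀ t, HasDerivAt z (-(z t * q t - α₀) * z t - η/2) t)
    (hw : ∀ t, HasDerivAt w ((x t * w t - z t * q t - α₂) * w t + y t * z t) t)
    (hq : ∀ t, HasDerivAt q ((z t * q t - x t * w t - α₀) * q t + x t * y t) t) :
    (∀ t : ℝ, y t - w t * q t =
      ((y t₀ - w t₀ * q t₀) * Complex.exp (t₀ : ℂ)) * Complex.exp (-(t : ℂ))) ∧
    (y t₀ - w t₀ * q t₀ = Complex.exp (-(t₀ : ℂ)) →
      ∀ t : ℝ, y t - w t * q t = Complex.exp (-(t : ℂ))) := by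
  set f : ℝ → ℂ := fun t => (y t - w t * q t) * Complex.exp (t : ℂ) with hf
  have key : ∀ t : ℝ, HasDerivAt f 0 t := by
    intro t
    have he : HasDerivAt (fun s : ℝ => Complex.exp (s : ℂ)) (Complex.exp (t : ℂ)) t :=
      (Complex.hasDerivAt_exp (t : ℂ)).comp_ofReal
    have h := ((hy t).sub ((hw t).mul (hq t))).mul he
    convert h using 1
    · rfl
    · rfl
    have hα₁ : α₁ = 1 - α₀ - α₂ := by linear_combination hα
    rw [hα₁]; simp only [Pi.sub_apply, Pi.mul_apply]; ring
  have hconst : ∀ t : ℝ, f t = f t₀ := by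
    intro t
    exact is_const_of_deriv_eq_zero (fun s => (key s).differentiableAt)
      (fun s => (key s).deriv) t t₀
  have main : ∀ t : ℝ, y t - w t * q t =
      ((y t₀ - w t₀ * q t₀) * Complex.exp (t₀ : ℂ)) * Complex.exp (-(t : ℂ)) := by
    intro t
    have h := hconst t
    simp only [hf] at h
    have hne : Complex.exp (t : ℂ) ≠ 0 := Complex.exp_ne_zero _
    have : Complex.exp (-(t : ℂ)) * Complex.exp (t : ℂ) = 1 := by
      rw [← Complex.exp_add]; simp
    linear_combination h * Complex.exp (-(t : ℂ)) - (y t - w t * q t) * this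
  refine ⟨main, ?_⟩
  · intro h0 t
    rw [main t, h0, ← Complex.exp_add]
    simp
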